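/- Let λ > 0 and let (b*, z*, B*) be an optimal solution to the SDP: minimize (1/2)⟨XᵀX, B⟩ − yᵀXb + (1/2)yᵀy + λ∑ᵢzᵢ subject to B ⪰ bbᵀ and [[zᵢ, bᵢ],[bᵢ, Bᵢᵢ]] ⪰ 0 for all i. Then for all i, zᵢ* ∈ [0,1], and zᵢ* = (bᵢ*)²/Bᵢᵢ* if Bᵢᵢ* ≠ 0 and zᵢ* = 0 otherwise. -/

import Mathlib

open Matrix Finset

/-- Feasibility in the SDP relaxation. -/
def SDPfeas {p : ℕ} (b z : Fin p → ℝ) (B : Matrix (Fin p) (Fin p) ℝ) : Prop :=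
  (B - Matrix.vecMulVec b b).PosSemidef ∧
    ∀ i, (!![z i, b i; b i, B i i] : Matrix (Fin 2) (Fin 2) ℝ).PosSemidef

/-- Objective of the SDP relaxation. -/
noncomputable def sdpObj {n p : ℕ} (X : Matrix (Fin n) (Fin p) ℝ) (y : Fin n → ℝ)
    (lam : ℝ) (b z : Fin p → ℝ) (B : Matrix (Fin p) (Fin p) ℝ) : ℝ :=
  (1/2) * ∑ i, ∑ j, (Xᵀ * X) i j * B i j - y ⬝ᵥ X.mulVec b
    + (1/2) * (y ⬝ᵥ y) + lam * ∑ i, z i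

lemma psd2_iff (z b B : ℝ) :
    (!![z, b; b, B] : Matrix (Fin 2) (Fin 2) ℝ).PosSemidef ↔
      0 ≤ z ∧ 0 ≤ B ∧ b^2 ≤ z * B := by
  constructor
  · intro h0
    obtain ⟨-, h⟩ := Matrix.posSemidef_iff_dotProduct_mulVec.mp h0
    have h1 := h ![1, 0]
    have h2 := h ![0, 1]
    have h3 := h ![B, -b]
    have h4 := h ![-b, z]
    have h5 := h ![-b, 1]
    simp [Matrix.mulVec, dotProduct, Fin.sum_univ_two] at h1 h2 h3 h4 h5
    refine ⟨by linarith, by linarith, ?_⟩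
    by_cases hB : B = 0
    · subst hB
      have hb : b = 0 := by nlinarith [h4, h5]
      simp [hb]
    · have hB' : 0 < B := lt_of_le_of_ne (by linarith) (Ne.symm hB)
      nlinarith [h3]
  · rintro ⟨hz, hB, hb⟩
    rw [Matrix.posSemidef_iff_dotProduct_mulVec]
    constructor
    · ext i j
      fin_cases i <;> fin_cases j <;> simp [Matrix.IsHermitian]
    · intro x
      have : star x = x := by ext i; simp
      rw [this]
      simp [Matrix.mulVec, dotProduct, Fin.sum_univ_two]
      rcases eq_or_lt_of_le hz with hz0 | hz0
      · have hb0 : b = 0 := by nlinarith [sq_nonneg b]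
        subst hb0
        nlinarith [sq_nonneg (x 0), sq_nonneg (x 1)]
      · nlinarith [sq_nonneg (z * x 0 + b * x 1), sq_nonneg (x 1)]

/-- at an optimal SDP solution, each `zᵢ* ∈ [0,1]` and
`zᵢ* = (bᵢ*)²/Bᵢᵢ*` if `Bᵢᵢ* ≠ 0`, `zᵢ* = 0` otherwise. -/
theorem stmt10 (n p : ℕ) (X : Matrix (Fin n) (Fin p) ℝ) (y : Fin n → ℝ)
    (lam : ℝ) (hlam : 0 < lam)
    (b z : Fin p → ℝ) (B : Matrix (Fin p) (Fin p) ℝ)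
    (hfeas : SDPfeas b z B)
    (hopt : ∀ (b' z' : Fin p → ℝ) (B' : Matrix (Fin p) (Fin p) ℝ),
      SDPfeas b' z' B' → sdpObj X y lam b z B ≤ sdpObj X y lam b' z' B') :
    ∀ i, z i ∈ Set.Icc (0:ℝ) 1 ∧
      z i = if B i i ≠ 0 then (b i)^2 / B i i else 0 := by
  obtain ⟨hB1, hB2⟩ := hfeas
  -- basic facts per coordinate
  have hfact : ∀ i, 0 ≤ z i ∧ 0 ≤ B i i ∧ (b i)^2 ≤ z i * B i i :=
    fun i => (psd2_iff _ _ _).mp (hB2 i)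
  have hdiag : ∀ i, (b i)^2 ≤ B i i := by
    intro i
    have := hB1.dotProduct_mulVec_nonneg (Pi.single i 1)
    simp [Matrix.mulVec, dotProduct, Pi.single_apply, Matrix.sub_apply,
      Matrix.vecMulVec_apply, Finset.sum_ite_eq', mul_ite] at this
    nlinarith [this]
  set z' : Fin p → ℝ := fun i => if B i i ≠ 0 then (b i)^2 / B i i else 0 with hz'
  have hzero : ∀ i, B i i = 0 → b i = 0 := by
    intro i h0
    have := (hfact i).2.2
    rw [h0, mul_zero] at this
    nlinarith [this]
  have hfeas' : SDPfeas b z' B := by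
    refine ⟨hB1, fun i => (psd2_iff _ _ _).mpr ?_⟩
    by_cases h0 : B i i = 0
    · simp [hz', h0, hzero i h0]
    · have hBpos : 0 < B i i := lt_of_le_of_ne (hfact i).2.1 (Ne.symm h0)
      refine ⟨?_, le_of_lt hBpos, ?_⟩
      · simp only [hz', h0]
        positivity
      · simp only [hz', h0, if_true, ne_eq, not_false_iff]
        rw [div_mul_cancel₀ _ h0]
  have hle : ∀ i, z' i ≤ z i := by
    intro i
    by_cases h0 : B i i = 0
    · simp [hz', h0, (hfact i).1]
    · have hBpos : 0 < B i i := lt_of_le_of_ne (hfact i).2.1 (Ne.symm h0)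
      simp only [hz', h0, ne_eq, not_false_iff, if_true]
      rw [div_le_iff₀ hBpos]
      exact (hfact i).2.2
  have key := hopt b z' B hfeas'
  simp only [sdpObj] at key
  have hsum : ∑ i, z i ≤ ∑ i, z' i := by
    have h2 : lam * ∑ i, z i ≤ lam * ∑ i, z' i := by linarith
    exact le_of_mul_le_mul_left h2 hlam
  have hsum' : ∑ i, z' i ≤ ∑ i, z i := Finset.sum_le_sum (fun i _ => hle i)
  have heq : ∀ i ∈ Finset.univ, z' i = z i := by
    rw [← Finset.sum_eq_sum_iff_of_le (fun i _ => hle i)]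
    linarith
  intro i
  have hzi : z i = z' i := (heq i (Finset.mem_univ i)).symm
  constructor
  · refine ⟨(hfact i).1, ?_⟩
    rw [hzi]
    by_cases h0 : B i i = 0
    · simp [hz', h0]
    · have hBpos : 0 < B i i := lt_of_le_of_ne (hfact i).2.1 (Ne.symm h0)
      simp only [hz', h0, ne_eq, not_false_iff, if_true]
      rw [div_le_one hBpos]
      exact hdiag i
  · exact hzi
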